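/- There exists a nonzero polynomial Λ(x) with deg Λ(x) ≤ Σᵢ₌₁ᴸ (deg m⁽ⁱ⁾(x) − τ⁽ⁱ⁾) satisfying deg(b⁽ⁱ⁾(x)·Λ(x) mod m⁽ⁱ⁾(x)) < τ⁽ⁱ⁾ simultaneously for i = 1,…,L. (Proved by a linear-algebra dimension count: the constraints define L linear maps from F^{ν+1} to F^{νᵢ} with νᵢ = deg m⁽ⁱ⁾ − τ⁽ⁱ⁾ and ν = Σνᵢ, whose kernels have a nontrivial common intersection.) -/

import Mathlib

open Polynomial

/-- There exists a nonzero polynomial `Λ` with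
`deg Λ ≤ ∑ i (deg m⁽ⁱ⁾ − τ⁽ⁱ⁾)` satisfying the SPI conditions simultaneously. -/
theorem spi_exists_with_degree_bound {F : Type*} [Field F] {L : ℕ}
    (b m : Fin L → F[X]) (τ : Fin L → ℕ)
    (hm : ∀ i, 1 ≤ (m i).degree)
    (hb : ∀ i, (b i).degree < (m i).degree)
    (hτ : ∀ i, (τ i : WithBot ℕ) ≤ (m i).degree)
    (hτlt : ∃ i, (τ i : WithBot ℕ) < (m i).degree) :
    ∃ Λ : F[X], Λ ≠ 0 ∧ Λ.natDegree ≤ ∑ i, ((m i).natDegree - τ i) ∧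
      ∀ i, (b i * Λ % m i).degree < (τ i : WithBot ℕ) := by
  classical
  have hm0 : ∀ i, m i ≠ 0 := fun i h => by simpa [h] using hm i
  set ν : ℕ := ∑ i, ((m i).natDegree - τ i) with hν
  -- the linear map encoding the constraints
  let φ : (degreeLT F (ν + 1) : Submodule F F[X]) →ₗ[F]
      (∀ i : Fin L, Fin ((m i).natDegree - τ i) → F) :=
    LinearMap.pi fun i => LinearMap.pi fun k =>
      (lcoeff F (τ i + (k : ℕ))) ∘ₗ
        (modByMonicHom (m i * C (m i).leadingCoeff⁻¹)) ∘ₗ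
        (LinearMap.mulLeft F (b i)) ∘ₗ (Submodule.subtype _)
  have hfd : FiniteDimensional F (degreeLT F (ν + 1) : Submodule F F[X]) :=
    (degreeLTEquiv F (ν + 1)).symm.finiteDimensional
  have hsrc : Module.finrank F (degreeLT F (ν + 1) : Submodule F F[X]) = ν + 1 := by
    rw [(degreeLTEquiv F (ν + 1)).finrank_eq, Module.finrank_fin_fun]
  have htgt : Module.finrank F (∀ i : Fin L, Fin ((m i).natDegree - τ i) → F) = ν := by
    rw [Module.finrank_pi_fintype]
    simp [Module.finrank_fin_fun]
    exact hν.symm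
  have hninj : ¬ Function.Injective φ := by
    intro h
    have := LinearMap.finrank_le_finrank_of_injective h
    rw [hsrc, htgt] at this
    omega
  rw [← LinearMap.ker_eq_bot] at hninj
  obtain ⟨Λ, hΛker, hΛne⟩ := Submodule.exists_mem_ne_zero_of_ne_bot hninj
  have hΛv : (Λ : F[X]) ≠ 0 := by
    simpa [Submodule.coe_eq_zero] using (Subtype.coe_ne_coe.mpr hΛne)
  refine ⟨(Λ : F[X]), hΛv, ?_, ?_⟩
  · have hdeg : (Λ : F[X]).degree < ((ν + 1 : ℕ) : WithBot ℕ) :=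
      mem_degreeLT.mp Λ.2
    have := natDegree_lt_iff_degree_lt hΛv |>.mpr hdeg
    omega
  · intro i
    have hτle : τ i ≤ (m i).natDegree := by
      have := hτ i
      rwa [degree_eq_natDegree (hm0 i), Nat.cast_le] at this
    have hzero : ∀ k : Fin ((m i).natDegree - τ i),
        (b i * (Λ : F[X]) % m i).coeff (τ i + (k : ℕ)) = 0 := by
      intro k
      have h0 : φ Λ = 0 := hΛker
      have := congrFun (congrFun h0 i) k
      simpa [φ, mod_def, modByMonicHom] using this
    have hmodlt : (b i * (Λ : F[X]) % m i).degree < (m i).degree :=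
      EuclideanDomain.mod_lt _ (by simpa [degree_eq_bot] using hm0 i)
    rw [degree_lt_iff_coeff_zero]
    intro j hj
    have hj' : τ i ≤ j := by exact_mod_cast hj
    by_cases hcase : j < (m i).natDegree
    · have hk : j - τ i < (m i).natDegree - τ i := by omega
      have := hzero ⟨j - τ i, hk⟩
      simpa [Nat.add_sub_cancel' hj'] using this
    · apply coeff_eq_zero_of_degree_lt
      calc (b i * (Λ : F[X]) % m i).degree < (m i).degree := hmodlt
        _ = ((m i).natDegree : WithBot ℕ) := degree_eq_natDegree (hm0 i)
        _ ≤ (j : WithBot ℕ) := by exact_mod_cast Nat.le_of_not_lt hcase
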